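/- For the modified Duffing–van der Pol system ẍ + ε(1 - x²)ẋ + x + α·x·ẋ + β·x² + γ·x³ = f·cos(ωt) with α, β ≠ 0, γ = -1/3 - (4/3)·β²/α², ε = α/(2β) + 2β/α, and α²ω² + 4β² ≠ 0, the function I(t,x,v) = (-v + ((α² + 4β²)/(6αβ))·x³ - (α/2)·x² - (α/(2β))·x)·e^{(2β/α)t} + (fα·(sin(ωt)·αω + 2cos(ωt)·β)/(α²ω² + 4β²))·e^{(2β/α)t} is a first integral: its total time derivative along solutions (with ẋ = v and v̇ = -ε(1-x²)v - x - αxv - βx² - γx³ + f·cos(ωt)) vanishes identically. -/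

import Mathlib

noncomputable def pdx (F : ℝ × ℝ × ℝ → ℝ) (p : ℝ × ℝ × ℝ) : ℝ :=
  deriv (fun t => F (t, p.2.1, p.2.2)) p.1

noncomputable def pdy (F : ℝ × ℝ × ℝ → ℝ) (p : ℝ × ℝ × ℝ) : ℝ :=
  deriv (fun t => F (p.1, t, p.2.2)) p.2.1

noncomputable def pdz (F : ℝ × ℝ × ℝ → ℝ) (p : ℝ × ℝ × ℝ) : ℝ :=
  deriv (fun t => F (p.1, p.2.1, t)) p.2.2

/-- The Cartan vector field `D = ∂ₓ + z ∂_y + φ ∂_z` of `y'' = φ(x,y,y')`. -/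
noncomputable def Dtot (φ F : ℝ × ℝ × ℝ → ℝ) (p : ℝ × ℝ × ℝ) : ℝ :=
  pdx F p + p.2.2 * pdy F p + φ p * pdz F p

/-- Evaluation of a polynomial in three variables at a point of ℝ³. -/
noncomputable def mev (P : MvPolynomial (Fin 3) ℝ) (p : ℝ × ℝ × ℝ) : ℝ :=
  MvPolynomial.eval ![p.1, p.2.1, p.2.2] P

/-- First integral of the forced modified Duffing–van der Pol oscillator for the
parameter relations γ = -1/3 - (4/3)β²/α², ε = α/(2β) + 2β/α. Here p = (t,x,v). -/
theorem duffing_van_der_pol_first_integral (α β f ω γ ε : ℝ)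
    (hα : α ≠ 0) (hβ : β ≠ 0) (hden : α ^ 2 * ω ^ 2 + 4 * β ^ 2 ≠ 0)
    (hγ : γ = -1 / 3 - (4 / 3) * β ^ 2 / α ^ 2)
    (hε : ε = α / (2 * β) + 2 * β / α) :
    ∀ p : ℝ × ℝ × ℝ,
      Dtot (fun q => -ε * (1 - q.2.1 ^ 2) * q.2.2 - q.2.1 - α * q.2.1 * q.2.2
          - β * q.2.1 ^ 2 - γ * q.2.1 ^ 3 + f * Real.cos (ω * q.1))
        (fun q =>
          (-q.2.2 + ((α ^ 2 + 4 * β ^ 2) / (6 * α * β)) * q.2.1 ^ 3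
              - (α / 2) * q.2.1 ^ 2 - (α / (2 * β)) * q.2.1)
            * Real.exp ((2 * β / α) * q.1)
          + (f * α * (Real.sin (ω * q.1) * α * ω + 2 * Real.cos (ω * q.1) * β)
              / (α ^ 2 * ω ^ 2 + 4 * β ^ 2)) * Real.exp ((2 * β / α) * q.1)) p
        = 0 := by
  rintro ⟨t, x, v⟩
  set c := 2 * β / α with hc
  set k := (α ^ 2 + 4 * β ^ 2) / (6 * α * β) with hk
  set den := α ^ 2 * ω ^ 2 + 4 * β ^ 2 with hd
  -- derivative in t
  have hE : ∀ s : ℝ, HasDerivAt (fun t : ℝ => Real.exp (c * t))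
      (Real.exp (c * s) * (c * 1)) s := fun s =>
    (((hasDerivAt_id s).const_mul c).exp)
  have hsin : HasDerivAt (fun t : ℝ => Real.sin (ω * t))
      (Real.cos (ω * t) * (ω * 1)) t := ((hasDerivAt_id t).const_mul ω).sin
  have hcos : HasDerivAt (fun t : ℝ => Real.cos (ω * t))
      (-Real.sin (ω * t) * (ω * 1)) t := ((hasDerivAt_id t).const_mul ω).cos
  have hX : HasDerivAt
      (fun t : ℝ => Real.sin (ω * t) * α * ω + 2 * Real.cos (ω * t) * β)
      (Real.cos (ω * t) * (ω * 1) * α * ω + 2 * (-Real.sin (ω * t) * (ω * 1)) * β) t := by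
    exact ((hsin.mul_const α).mul_const ω).add ((hcos.const_mul 2).mul_const β)
  have hB : HasDerivAt
      (fun t : ℝ => f * α * (Real.sin (ω * t) * α * ω + 2 * Real.cos (ω * t) * β) / den)
      (f * α * (Real.cos (ω * t) * (ω * 1) * α * ω + 2 * (-Real.sin (ω * t) * (ω * 1)) * β) / den) t := by
    exact (hX.const_mul (f * α)).div_const den
  have ht : HasDerivAt
      (fun s : ℝ =>
        (-v + k * x ^ 3 - α / 2 * x ^ 2 - α / (2 * β) * x) * Real.exp (c * s)
        + f * α * (Real.sin (ω * s) * α * ω + 2 * Real.cos (ω * s) * β) / den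
            * Real.exp (c * s))
      ((-v + k * x ^ 3 - α / 2 * x ^ 2 - α / (2 * β) * x) * (Real.exp (c * t) * (c * 1))
        + (f * α * (Real.cos (ω * t) * (ω * 1) * α * ω + 2 * (-Real.sin (ω * t) * (ω * 1)) * β) / den
            * Real.exp (c * t)
          + f * α * (Real.sin (ω * t) * α * ω + 2 * Real.cos (ω * t) * β) / den
            * (Real.exp (c * t) * (c * 1)))) t := by
    exact ((hE t).const_mul _).add (hB.mul (hE t))
  -- derivative in x
  have hx : HasDerivAt
      (fun y : ℝ =>
        (-v + k * y ^ 3 - α / 2 * y ^ 2 - α / (2 * β) * y) * Real.exp (c * t)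
        + f * α * (Real.sin (ω * t) * α * ω + 2 * Real.cos (ω * t) * β) / den
            * Real.exp (c * t))
      ((k * (3 * x ^ 2) - α / 2 * (2 * x) - α / (2 * β)) * Real.exp (c * t)) x := by
    have h1 : HasDerivAt (fun y : ℝ => -v + k * y ^ 3 - α / 2 * y ^ 2 - α / (2 * β) * y)
        (k * (3 * x ^ 2) - α / 2 * (2 * x) - α / (2 * β)) x := by
      have := ((((hasDerivAt_pow 3 x).const_mul k).const_add (-v)).sub
        ((hasDerivAt_pow 2 x).const_mul (α / 2))).sub ((hasDerivAt_id x).const_mul (α / (2 * β)))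
      simpa [mul_comm, mul_assoc, mul_left_comm, Pi.sub_def] using this
    exact (h1.mul_const _).add_const _
  -- derivative in v
  have hv : HasDerivAt
      (fun w : ℝ =>
        (-w + k * x ^ 3 - α / 2 * x ^ 2 - α / (2 * β) * x) * Real.exp (c * t)
        + f * α * (Real.sin (ω * t) * α * ω + 2 * Real.cos (ω * t) * β) / den
            * Real.exp (c * t))
      (-Real.exp (c * t)) v := by
    have h1 : HasDerivAt (fun w : ℝ => -w + k * x ^ 3 - α / 2 * x ^ 2 - α / (2 * β) * x)
        (-1) v := by
      simpa using (((hasDerivAt_id v).neg.add_const (k * x ^ 3)).sub_const (α / 2 * x ^ 2)).sub_const (α / (2 * β) * x)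
    simpa using (h1.mul_const (Real.exp (c * t))).add_const (f * α * (Real.sin (ω * t) * α * ω + 2 * Real.cos (ω * t) * β) / den * Real.exp (c * t))
  simp only [Dtot, pdx, pdy, pdz]
  rw [ht.deriv, hx.deriv, hv.deriv]
  have hE0 : Real.exp (c * t) ≠ 0 := Real.exp_ne_zero _
  simp only [hc, hk, hd] at *
  subst hγ hε
  field_simp
  ring
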